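/- Let 1 ≤ p ≤ 2. Then ℓ_p coarsely embeds into a Hilbert space: there exist a real Hilbert space H, a map T : ℓ_p → H, and nondecreasing functions ρ₁, ρ₂ : [0,∞) → [0,∞) with ρ₁(t) → ∞ as t → ∞, such that ρ₁(‖x − y‖_p) ≤ ‖T(x) − T(y)‖_H ≤ ρ₂(‖x − y‖_p) for all x, y ∈ ℓ_p. -/

import Mathlib

open MeasureTheory Real Set

section CoarseEmbeddingAux

lemma integrableOn_kernel (p c : ℝ) (hp1 : 0 < p) (hp2 : p < 2) :
    IntegrableOn (fun u => (1 - Real.cos (u * c)) * u ^ (-1 - p)) (Set.Ioi (0 : ℝ)) := by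
  have hmeas : AEStronglyMeasurable (fun u : ℝ => (1 - Real.cos (u * c)) * u ^ (-1 - p))
      (volume : Measure ℝ) := by measurability
  have h1 : IntegrableOn (fun u => (1 - Real.cos (u * c)) * u ^ (-1 - p)) (Set.Ioc (0:ℝ) 1) := by
    have hint : IntegrableOn (fun u : ℝ => c ^ 2 * u ^ (1 - p)) (Set.Ioc (0:ℝ) 1) := by
      refine Integrable.const_mul ?_ _
      have := intervalIntegral.intervalIntegrable_rpow' (a := 0) (b := 1) (r := 1 - p)
        (by linarith)
      rwa [intervalIntegrable_iff, Set.uIoc_of_le zero_le_one] at this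
    refine Integrable.mono hint hmeas.restrict ?_
    filter_upwards [ae_restrict_mem measurableSet_Ioc] with u hu
    have hu0 : 0 < u := hu.1
    have hcos : 1 - Real.cos (u * c) ≤ c ^ 2 * u ^ (2:ℕ) := by
      have := Real.one_sub_sq_div_two_le_cos (x := u * c)
      nlinarith [sq_nonneg (u*c)]
    have hnn : 0 ≤ 1 - Real.cos (u * c) := by nlinarith [Real.cos_le_one (u * c)]
    have hr : (0:ℝ) ≤ u ^ (-1 - p) := Real.rpow_nonneg hu0.le _
    rw [Real.norm_eq_abs, Real.norm_eq_abs, abs_of_nonneg (by positivity)]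
    have key : (1 - Real.cos (u * c)) * u ^ (-1 - p) ≤ c ^ 2 * u ^ (1 - p) := by
      have h2 : (u:ℝ) ^ (2:ℕ) * u ^ (-1 - p) = u ^ (1 - p) := by
        rw [← Real.rpow_natCast u 2, ← Real.rpow_add hu0]
        norm_num
        rw [show (2:ℝ) + (-1 - p) = 1 - p by ring]
      calc (1 - Real.cos (u * c)) * u ^ (-1 - p) ≤ (c ^ 2 * u ^ (2:ℕ)) * u ^ (-1 - p) := by
            exact mul_le_mul_of_nonneg_right hcos hr
        _ = c ^ 2 * (u ^ (2:ℕ) * u ^ (-1 - p)) := by ring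
        _ = c ^ 2 * u ^ (1 - p) := by rw [h2]
    exact key.trans (le_abs_self _)
  have h2 : IntegrableOn (fun u => (1 - Real.cos (u * c)) * u ^ (-1 - p)) (Set.Ioi (1:ℝ)) := by
    have hint : IntegrableOn (fun u : ℝ => 2 * u ^ (-1 - p)) (Set.Ioi (1:ℝ)) :=
      (integrableOn_Ioi_rpow_of_lt (by linarith) zero_lt_one).const_mul 2
    refine Integrable.mono hint hmeas.restrict ?_
    filter_upwards [ae_restrict_mem measurableSet_Ioi] with u hu
    have hu0 : (0:ℝ) < u := lt_trans zero_lt_one hu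
    have hr : (0:ℝ) ≤ u ^ (-1 - p) := Real.rpow_nonneg hu0.le _
    have hnn : 0 ≤ 1 - Real.cos (u * c) := by nlinarith [Real.cos_le_one (u * c)]
    rw [Real.norm_eq_abs, Real.norm_eq_abs, abs_of_nonneg (by positivity)]
    have : (1 - Real.cos (u * c)) * u ^ (-1 - p) ≤ 2 * u ^ (-1 - p) := by
      have := Real.neg_one_le_cos (u * c)
      nlinarith
    exact this.trans (le_abs_self _)
  have : Set.Ioc (0:ℝ) 1 ∪ Set.Ioi 1 = Set.Ioi (0:ℝ) := Set.Ioc_union_Ioi_eq_Ioi zero_le_one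
  rw [← this]
  exact h1.union h2

lemma kernel_scaling (p : ℝ) {c : ℝ} (hc : 0 < c) :
    ∫ u in Ioi (0:ℝ), (1 - Real.cos (u * c)) * u ^ (-1 - p)
      = c ^ p * ∫ u in Ioi (0:ℝ), (1 - Real.cos u) * u ^ (-1 - p) := by
  have key : ∀ u ∈ Ioi (0:ℝ), (1 - Real.cos (u * c)) * u ^ (-1 - p)
      = c ^ (1 + p) * ((1 - Real.cos (u * c)) * (u * c) ^ (-1 - p)) := by
    intro u hu
    have hu0 : (0:ℝ) < u := hu
    have h1 : (u * c) ^ (-1 - p) = u ^ (-1 - p) * c ^ (-1 - p) :=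
      Real.mul_rpow hu0.le hc.le
    have h2 : c ^ (1 + p) * c ^ (-1 - p) = 1 := by
      rw [← Real.rpow_add hc]; norm_num
    calc (1 - Real.cos (u * c)) * u ^ (-1 - p)
        = (c ^ (1 + p) * c ^ (-1 - p)) * ((1 - Real.cos (u * c)) * u ^ (-1 - p)) := by
          rw [h2]; ring
      _ = c ^ (1 + p) * ((1 - Real.cos (u * c)) * (u ^ (-1 - p) * c ^ (-1 - p))) := by ring
      _ = c ^ (1 + p) * ((1 - Real.cos (u * c)) * (u * c) ^ (-1 - p)) := by rw [h1]
  rw [setIntegral_congr_fun measurableSet_Ioi key, MeasureTheory.integral_const_mul,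
    integral_comp_mul_right_Ioi (fun y => (1 - Real.cos y) * y ^ (-1 - p)) 0 hc]
  rw [zero_mul, smul_eq_mul]
  rw [← mul_assoc]
  congr 1
  rw [Real.rpow_add hc, Real.rpow_one]
  field_simp

lemma kernel_pos (p : ℝ) (hp1 : 0 < p) (hp2 : p < 2)
    (hint : IntegrableOn (fun u => (1 - Real.cos u) * u ^ (-1 - p)) (Set.Ioi (0 : ℝ))) :
    0 < ∫ u in Ioi (0:ℝ), (1 - Real.cos u) * u ^ (-1 - p) := by
  have hnn : 0 ≤ᵐ[volume.restrict (Ioi (0:ℝ))]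
      fun u => (1 - Real.cos u) * u ^ (-1 - p) := by
    filter_upwards [ae_restrict_mem measurableSet_Ioi] with u hu
    have h : 0 ≤ 1 - Real.cos u := by nlinarith [Real.cos_le_one u]
    have hu0 : (0:ℝ) < u := hu
    exact mul_nonneg h (Real.rpow_nonneg hu0.le _)
  rw [setIntegral_pos_iff_support_of_nonneg_ae hnn hint]
  have hsub : Ioo (1:ℝ) 3 ⊆ (Function.support fun u => (1 - Real.cos u) * u ^ (-1 - p)) ∩ Ioi 0 := by
    intro u hu
    have hu0 : (0:ℝ) < u := lt_trans zero_lt_one hu.1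
    constructor
    · have hlt : Real.cos u < 1 := by
        have : Real.cos u < Real.cos 0 :=
          Real.cos_lt_cos_of_nonneg_of_le_pi le_rfl
            (le_trans hu.2.le (by linarith [Real.pi_gt_d6])) hu0
        simpa using this
      have h1 : 0 < 1 - Real.cos u := by linarith
      have h2 : 0 < u ^ (-1 - p) := Real.rpow_pos_of_pos hu0 _
      exact ne_of_gt (by positivity)
    · exact hu0
  calc (0:ENNReal) < volume (Ioo (1:ℝ) 3) := by simp [Real.volume_Ioo]
    _ ≤ _ := measure_mono hsub

noncomputable def Fker (p s : ℝ) : ℝ → EuclideanSpace ℝ (Fin 2) :=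
  fun u => u ^ (-(1 + p) / 2) •
    (WithLp.equiv 2 (Fin 2 → ℝ)).symm ![Real.cos (u * s) - 1, Real.sin (u * s)]

lemma Fker_zero (p : ℝ) : Fker p 0 = 0 := by
  funext u
  simp only [Fker, mul_zero, Real.cos_zero, Real.sin_zero, sub_self]
  have : ![ (0:ℝ), 0] = 0 := by funext i; fin_cases i <;> simp
  rw [this]
  simp

lemma normsq_Fker (p s t : ℝ) {u : ℝ} (hu : 0 < u) :
    ‖Fker p s u - Fker p t u‖ ^ 2 = (2 - 2 * Real.cos (u * (s - t))) * u ^ (-1 - p) := by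
  have key : ∀ x : EuclideanSpace ℝ (Fin 2), ‖x‖ ^ 2 = ‖x 0‖ ^ 2 + ‖x 1‖ ^ 2 := by
    intro x
    rw [EuclideanSpace.norm_eq, Real.sq_sqrt (by positivity)]
    rw [Fin.sum_univ_two]
  rw [key]
  have h0 : (Fker p s u - Fker p t u) 0
      = u ^ (-(1 + p) / 2) * (Real.cos (u * s) - Real.cos (u * t)) := by
    simp [Fker, WithLp.equiv_symm_apply, PiLp.sub_apply, PiLp.smul_apply, smul_eq_mul]
    ring
  have h1 : (Fker p s u - Fker p t u) 1
      = u ^ (-(1 + p) / 2) * (Real.sin (u * s) - Real.sin (u * t)) := by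
    simp [Fker, WithLp.equiv_symm_apply, PiLp.sub_apply, PiLp.smul_apply, smul_eq_mul]
    ring
  rw [h0, h1, Real.norm_eq_abs, Real.norm_eq_abs, sq_abs, sq_abs]
  have hw2 : (u ^ (-(1 + p) / 2)) ^ 2 = u ^ (-1 - p) := by
    rw [← Real.rpow_natCast (u ^ (-(1 + p) / 2)) 2, ← Real.rpow_mul hu.le]
    norm_num
    rw [show -p + -1 = -1 - p by ring]
  have expand : (Real.cos (u * s) - Real.cos (u * t)) ^ 2
      + (Real.sin (u * s) - Real.sin (u * t)) ^ 2 = 2 - 2 * Real.cos (u * (s - t)) := by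
    rw [mul_sub, Real.cos_sub]
    linear_combination Real.sin_sq_add_cos_sq (u * s) + Real.sin_sq_add_cos_sq (u * t)
  calc (u ^ (-(1 + p) / 2) * (Real.cos (u * s) - Real.cos (u * t))) ^ 2
      + (u ^ (-(1 + p) / 2) * (Real.sin (u * s) - Real.sin (u * t))) ^ 2
      = ((Real.cos (u * s) - Real.cos (u * t)) ^ 2
        + (Real.sin (u * s) - Real.sin (u * t)) ^ 2) * (u ^ (-(1 + p) / 2)) ^ 2 := by ring
    _ = (2 - 2 * Real.cos (u * (s - t))) * u ^ (-1 - p) := by rw [expand, hw2]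

lemma contOn_Fker (p s : ℝ) : ContinuousOn (Fker p s) (Ioi (0:ℝ)) := by
  apply ContinuousOn.fun_smul
  · intro u hu
    exact (Real.continuousAt_rpow_const u _ (Or.inl (ne_of_gt hu))).continuousWithinAt
  · apply Continuous.continuousOn
    apply (PiLp.continuous_toLp 2 (fun _ : Fin 2 => ℝ)).comp
    apply continuous_pi
    intro i
    fin_cases i <;> simp <;> fun_prop

lemma memLp_Fker (p s : ℝ) (hp1 : 1 ≤ p) (hp2 : p < 2) :
    MemLp (Fker p s) 2 (volume.restrict (Ioi (0:ℝ))) := by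
  have hasm : AEStronglyMeasurable (Fker p s) (volume.restrict (Ioi (0:ℝ))) :=
    (contOn_Fker p s).aestronglyMeasurable measurableSet_Ioi
  rw [memLp_two_iff_integrable_sq_norm hasm]
  have hint : IntegrableOn (fun u => 2 * ((1 - Real.cos (u * s)) * u ^ (-1 - p))) (Ioi (0:ℝ)) :=
    (integrableOn_kernel p s (by linarith) hp2).const_mul 2
  apply hint.congr_fun ?_ measurableSet_Ioi
  intro u hu
  have h := normsq_Fker p s 0 hu
  rw [Fker_zero] at h
  simp only [Pi.zero_apply, sub_zero] at h
  show _ = ‖Fker p s u‖ ^ 2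
  rw [h]
  ring

noncomputable def phi (p : ℝ) (hp1 : 1 ≤ p) (hp2 : p < 2) (s : ℝ) :
    Lp (EuclideanSpace ℝ (Fin 2)) 2 (volume.restrict (Ioi (0:ℝ))) :=
  (memLp_Fker p s hp1 hp2).toLp (Fker p s)

lemma phi_zero (p : ℝ) (hp1 : 1 ≤ p) (hp2 : p < 2) : phi p hp1 hp2 0 = 0 := by
  unfold phi
  have h1 : (memLp_Fker p 0 hp1 hp2).toLp (Fker p 0) = MemLp.toLp (0 : ℝ → EuclideanSpace ℝ (Fin 2)) (MemLp.zero (ε := EuclideanSpace ℝ (Fin 2)) (p := (2 : ENNReal)) (μ := volume.restrict (Ioi (0:ℝ)))) :=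
    ((memLp_Fker p 0 hp1 hp2).toLp_eq_toLp_iff (MemLp.zero (ε := EuclideanSpace ℝ (Fin 2)) (p := (2 : ENNReal)) (μ := volume.restrict (Ioi (0:ℝ))))).mpr
      (by rw [Fker_zero])
  rw [h1, MemLp.toLp_zero]

lemma norm_phi_sub (p : ℝ) (hp1 : 1 ≤ p) (hp2 : p < 2) (s t : ℝ) :
    ‖phi p hp1 hp2 s - phi p hp1 hp2 t‖ ^ 2
      = (2 * ∫ u in Ioi (0:ℝ), (1 - Real.cos u) * u ^ (-1 - p)) * |s - t| ^ p := by
  set g := phi p hp1 hp2 s - phi p hp1 hp2 t with hg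
  have h1 : ‖g‖ ^ 2 = (inner ℝ g g) := (real_inner_self_eq_norm_sq g).symm
  have hae : g =ᵐ[volume.restrict (Ioi (0:ℝ))] fun u => Fker p s u - Fker p t u := by
    rw [hg, phi, phi, ← MemLp.toLp_sub]
    exact MemLp.coeFn_toLp _
  have h2 : (inner ℝ g g) = ∫ u in Ioi (0:ℝ), ‖Fker p s u - Fker p t u‖ ^ 2 := by
    rw [MeasureTheory.L2.inner_def]
    apply integral_congr_ae
    filter_upwards [hae] with u hu
    rw [hu, real_inner_self_eq_norm_sq]
  rw [h1, h2]
  have h3 : ∫ u in Ioi (0:ℝ), ‖Fker p s u - Fker p t u‖ ^ 2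
      = 2 * ∫ u in Ioi (0:ℝ), (1 - Real.cos (u * |s - t|)) * u ^ (-1 - p) := by
    rw [← MeasureTheory.integral_const_mul]
    apply setIntegral_congr_fun measurableSet_Ioi
    intro u hu
    have hu0 : (0:ℝ) < u := hu
    show ‖Fker p s u - Fker p t u‖ ^ 2 = _
    rw [normsq_Fker p s t hu0]
    have : Real.cos (u * (s - t)) = Real.cos (u * |s - t|) := by
      rw [← Real.cos_abs (u * (s - t)), ← Real.cos_abs (u * |s - t|),
        abs_mul, abs_mul, abs_abs, abs_of_nonneg hu0.le]
    rw [this]; ring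
  rw [h3]
  rcases eq_or_ne s t with h | h
  · subst h
    simp [Real.zero_rpow (by linarith : p ≠ 0)]
  · have hc : 0 < |s - t| := abs_pos.mpr (sub_ne_zero.mpr h)
    rw [kernel_scaling p hc]
    ring

end CoarseEmbeddingAux

/-- For `1 ≤ p ≤ 2`, the space `ℓ_p` coarsely embeds into a Hilbert
space: there are a real Hilbert space `H`, a map `T : ℓ_p → H`, and nondecreasing
functions `ρ₁, ρ₂ : [0,∞) → [0,∞)` with `ρ₁(t) → ∞` as `t → ∞`, such that
`ρ₁(‖x-y‖_p) ≤ ‖T x - T y‖ ≤ ρ₂(‖x-y‖_p)` for all `x, y ∈ ℓ_p`. -/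
theorem lp_coarsely_embeds_into_Hilbert
    (p : ℝ) (hp1 : 1 ≤ p) (hp2 : p ≤ 2) :
    ∃ (H : Type) (_ : NormedAddCommGroup H) (_ : InnerProductSpace ℝ H)
      (_ : CompleteSpace H) (T : lp (fun _ : ℕ => ℝ) (ENNReal.ofReal p) → H)
      (ρ₁ ρ₂ : ℝ → ℝ),
      (∀ s ∈ Set.Ici (0 : ℝ), 0 ≤ ρ₁ s) ∧
      (∀ s ∈ Set.Ici (0 : ℝ), 0 ≤ ρ₂ s) ∧
      MonotoneOn ρ₁ (Set.Ici (0 : ℝ)) ∧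
      MonotoneOn ρ₂ (Set.Ici (0 : ℝ)) ∧
      Filter.Tendsto ρ₁ Filter.atTop Filter.atTop ∧
      ∀ x y : lp (fun _ : ℕ => ℝ) (ENNReal.ofReal p),
        ρ₁ ‖x - y‖ ≤ ‖T x - T y‖ ∧ ‖T x - T y‖ ≤ ρ₂ ‖x - y‖ := by
  rcases lt_or_eq_of_le hp2 with hlt | heq
  · -- case 1 ≤ p < 2 : use the Lévy kernel embedding into ℓ²(ℕ, L²)
    haveI : Fact (1 ≤ ENNReal.ofReal p) := ⟨ENNReal.one_le_ofReal.mpr hp1⟩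
    set K : ℝ := ∫ u in Ioi (0:ℝ), (1 - Real.cos u) * u ^ (-1 - p) with hKdef
    have hKint : IntegrableOn (fun u => (1 - Real.cos u) * u ^ (-1 - p)) (Set.Ioi (0 : ℝ)) := by
      have := integrableOn_kernel p 1 (by linarith) hlt
      apply this.congr_fun ?_ measurableSet_Ioi
      intro u _
      simp
    have hK : 0 < K := kernel_pos p (by linarith) hlt hKint
    set E := Lp (EuclideanSpace ℝ (Fin 2)) 2 (volume.restrict (Ioi (0:ℝ))) with hE
    have hnormphi : ∀ s : ℝ, ‖phi p hp1 hlt s‖ ^ 2 = (2 * K) * |s| ^ p := by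
      intro s
      have := norm_phi_sub p hp1 hlt s 0
      rw [phi_zero, sub_zero, sub_zero] at this
      exact this
    have hptoReal : (ENNReal.ofReal p).toReal = p := ENNReal.toReal_ofReal (by linarith)
    have hp0 : (0:ℝ) < p := by linarith
    -- membership of the embedded sequences
    have hmem : ∀ x : lp (fun _ : ℕ => ℝ) (ENNReal.ofReal p),
        Memℓp (fun i => phi p hp1 hlt (x i)) 2 := by
      intro x
      apply memℓp_gen
      have hx : Summable fun i => ‖x i‖ ^ p := by
        have := (lp.memℓp x).summable (by rw [hptoReal]; exact hp0)
        rwa [hptoReal] at this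
      have hx2 : Summable fun i => (2 * K) * ‖x i‖ ^ p := hx.mul_left _
      apply hx2.congr
      intro i
      rw [show ((2:ENNReal).toReal) = ((2:ℕ):ℝ) by norm_num, Real.rpow_natCast]
      rw [hnormphi (x i), Real.norm_eq_abs]
    set T : lp (fun _ : ℕ => ℝ) (ENNReal.ofReal p) → lp (fun _ : ℕ => E) 2 :=
      fun x => ⟨fun i => phi p hp1 hlt (x i), hmem x⟩ with hT
    have hTnorm : ∀ x y : lp (fun _ : ℕ => ℝ) (ENNReal.ofReal p),
        ‖T x - T y‖ = Real.sqrt (2 * K) * ‖x - y‖ ^ (p / 2) := by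
      intro x y
      have hsq : ‖T x - T y‖ ^ (2:ℕ) = (2 * K) * ‖x - y‖ ^ p := by
        have h1 := lp.norm_rpow_eq_tsum (p := 2)
          (by norm_num) (T x - T y)
        rw [show ((2:ENNReal).toReal) = ((2:ℕ):ℝ) by norm_num] at h1
        simp only [Real.rpow_natCast] at h1
        rw [h1]
        have h2 := lp.norm_rpow_eq_tsum (p := ENNReal.ofReal p)
          (by rw [hptoReal]; exact hp0) (x - y)
        rw [hptoReal] at h2
        have hcoord : ∀ i : ℕ, ‖(T x - T y) i‖ ^ (2:ℕ)
            = (2 * K) * ‖(x - y) i‖ ^ p := by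
          intro i
          have : (T x - T y) i = phi p hp1 hlt (x i) - phi p hp1 hlt (y i) := by
            rw [lp.coeFn_sub, Pi.sub_apply]
          rw [this, norm_phi_sub p hp1 hlt]
          rw [lp.coeFn_sub, Pi.sub_apply, Real.norm_eq_abs]
        calc ∑' i, ‖(T x - T y) i‖ ^ (2:ℕ)
            = ∑' i, (2 * K) * ‖(x - y) i‖ ^ p := by
              exact tsum_congr hcoord
          _ = (2 * K) * ∑' i, ‖(x - y) i‖ ^ p := tsum_mul_left
          _ = (2 * K) * ‖x - y‖ ^ p := by rw [← h2]
      have hnn : (0:ℝ) ≤ ‖T x - T y‖ := norm_nonneg _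
      have hpow : (Real.sqrt (2 * K) * ‖x - y‖ ^ (p / 2)) ^ (2:ℕ)
          = (2 * K) * ‖x - y‖ ^ p := by
        rw [mul_pow, Real.sq_sqrt (by positivity)]
        congr 1
        rw [← Real.rpow_natCast (‖x - y‖ ^ (p / 2)) 2, ← Real.rpow_mul (norm_nonneg _)]
        norm_num
      rw [← Real.sqrt_sq hnn, hsq, ← hpow, Real.sqrt_sq (by positivity)]
    refine ⟨lp (fun _ : ℕ => E) 2, inferInstance, inferInstance, inferInstance, T,
      (fun t => Real.sqrt (2 * K) * t ^ (p / 2)),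
      (fun t => Real.sqrt (2 * K) * t ^ (p / 2)), ?_, ?_, ?_, ?_, ?_, ?_⟩
    · intro s hs
      have : (0:ℝ) ≤ s := hs
      positivity
    · intro s hs
      have : (0:ℝ) ≤ s := hs
      positivity
    · intro a ha b hb hab
      exact mul_le_mul_of_nonneg_left
        (Real.rpow_le_rpow ha hab (by positivity)) (Real.sqrt_nonneg _)
    · intro a ha b hb hab
      exact mul_le_mul_of_nonneg_left
        (Real.rpow_le_rpow ha hab (by positivity)) (Real.sqrt_nonneg _)
    · apply Filter.Tendsto.const_mul_atTop (Real.sqrt_pos.mpr (by positivity))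
      exact tendsto_rpow_atTop (by positivity)
    · intro x y
      rw [hTnorm x y]
      exact ⟨le_refl _, le_refl _⟩
  · -- case p = 2 : ℓ₂ is itself a Hilbert space
    subst heq
    rw [show ENNReal.ofReal (2:ℝ) = 2 by norm_num]
    refine ⟨lp (fun _ : ℕ => ℝ) 2, inferInstance, inferInstance, inferInstance, id,
      id, id, fun s hs => hs, fun s hs => hs, fun a _ b _ h => h, fun a _ b _ h => h,
      Filter.tendsto_id, fun x y => ⟨le_refl _, le_refl _⟩⟩
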